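/- Let μ ∈ ℝ^p and let Σ ∈ ℝ^{p×p} be symmetric positive definite, and let q be the density of the normal distribution N(μ, Σ) on ℝ^p, q(x) = (2π)^{-p/2} (det Σ)^{-1/2} exp(−(x−μ)ᵀΣ^{-1}(x−μ)/2). For j ∈ {1,…,p}, the function Φ_{μ_j}(x) := x_j − μ_j satisfies: (i) A(∇_x Φ_{μ_j})(x) = −(Σ^{-1}(x−μ))_j = −∂_{μ_j} log q(x) for all x ∈ ℝ^p, where A is the divergence-based Stein operator of q; and (ii) E_q[Φ_{μ_j}] = 0. Hence Φ_{μ_j} is the Wasserstein score function of the mean parameter μ_j. -/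

import Mathlib

open MeasureTheory Real Matrix

/-- Partial derivative in the `i`-th coordinate. -/
noncomputable def pdv {n : ℕ} (i : Fin n) (f : (Fin n → ℝ) → ℝ) (x : Fin n → ℝ) : ℝ :=
  deriv (fun t => f (Function.update x i t)) (x i)

/-- Gradient of a scalar function on ℝ^n. -/
noncomputable def gradv {n : ℕ} (f : (Fin n → ℝ) → ℝ) (x : Fin n → ℝ) : Fin n → ℝ :=
  fun i => pdv i f x

/-- Divergence of a vector field on ℝ^n. -/
noncomputable def divv {n : ℕ} (f : (Fin n → ℝ) → (Fin n → ℝ)) (x : Fin n → ℝ) : ℝ :=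
  ∑ i, pdv i (fun y => f y i) x

/-- Divergence-based Stein operator `A_q f = div(q f) / q`. -/
noncomputable def stein {n : ℕ} (q : (Fin n → ℝ) → ℝ) (f : (Fin n → ℝ) → (Fin n → ℝ))
    (x : Fin n → ℝ) : ℝ :=
  divv (fun y i => q y * f y i) x / q x

/-- The density of the normal distribution `N(μ, Σ)` on ℝ^p. -/
noncomputable def gaussDens {p : ℕ} (μ : Fin p → ℝ) (Cov : Matrix (Fin p) (Fin p) ℝ)
    (x : Fin p → ℝ) : ℝ :=
  (2 * Real.pi) ^ (-(p : ℝ) / 2) * Cov.det ^ (-(1 : ℝ) / 2)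
    * Real.exp (-((x - μ) ⬝ᵥ (Cov⁻¹ *ᵥ (x - μ))) / 2)

lemma quadDeriv {p : ℕ} (A : Matrix (Fin p) (Fin p) ℝ) (hA : A.IsSymm) (w : Fin p → ℝ) (j : Fin p) :
    HasDerivAt (fun s => Function.update w j s ⬝ᵥ (A *ᵥ Function.update w j s))
      (2 * (A *ᵥ w) j) (w j) := by
  have key : ∀ s, Function.update w j s ⬝ᵥ (A *ᵥ Function.update w j s)
      = ∑ i, ∑ k, (if i = j then s else w i) * (A i k * (if k = j then s else w k)) := by
    intro s
    simp only [dotProduct, mulVec, dotProduct, Finset.mul_sum, Function.update_apply]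
  have hsum : HasDerivAt (fun s => ∑ i, ∑ k, (if i = j then s else w i) * (A i k * (if k = j then s else w k)))
      (∑ i, ∑ k, ((if i = j then (1:ℝ) else 0) * (A i k * w k) + w i * (if k = j then A i k else 0))) (w j) := by
    apply HasDerivAt.fun_sum
    intro i _
    apply HasDerivAt.fun_sum
    intro k _
    by_cases hi : i = j <;> by_cases hk : k = j
    · subst hi; subst hk
      simpa using ((hasDerivAt_id' (w k)).fun_mul (((hasDerivAt_id' (w k)).const_mul (A k k))))
    · subst hi
      simp only [if_true, hk, if_false]
      simpa using (hasDerivAt_id (w i)).mul_const (A i k * w k)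
    · subst hk
      simp only [hi, if_false, if_true]
      simpa [mul_comm, mul_left_comm] using ((hasDerivAt_id (w k)).const_mul (A i k)).const_mul (w i)
    · simp only [hi, hk, if_false]
      simpa using hasDerivAt_const (w j) (w i * (A i k * w k))
  have heq : (∑ i, ∑ k, ((if i = j then (1:ℝ) else 0) * (A i k * w k) + w i * (if k = j then A i k else 0)))
      = 2 * (A *ᵥ w) j := by
    rw [Finset.sum_congr rfl (fun i _ => Finset.sum_add_distrib), Finset.sum_add_distrib]
    have h1 : (∑ i, ∑ k, (if i = j then (1:ℝ) else 0) * (A i k * w k)) = (A *ᵥ w) j := by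
      simp [Finset.sum_ite_eq', mulVec, dotProduct, ite_mul]
    have h2 : (∑ i, ∑ k, w i * (if k = j then A i k else 0)) = (A *ᵥ w) j := by
      have h3 : ∀ i, (∑ k, w i * (if k = j then A i k else 0)) = A j i * w i := by
        intro i
        have : A i j = A j i := hA.apply j i
        simp [mul_ite, Finset.sum_ite_eq', this, mul_comm]
      rw [Finset.sum_congr rfl (fun i _ => h3 i)]
      simp [mulVec, dotProduct]
    rw [h1, h2]; ring
  rw [← heq]
  exact hsum.congr_of_eventuallyEq (by filter_upwards with s using key s)

lemma gaussDens_pos {p : ℕ} (μ : Fin p → ℝ) (Cov : Matrix (Fin p) (Fin p) ℝ)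
    (hpd : Cov.PosDef) (x : Fin p → ℝ) : 0 < gaussDens μ Cov x := by
  unfold gaussDens
  have h1 : (0:ℝ) < (2 * Real.pi) ^ (-(p : ℝ) / 2) :=
    Real.rpow_pos_of_pos (by positivity) _
  have h2 : (0:ℝ) < Cov.det ^ (-(1 : ℝ) / 2) :=
    Real.rpow_pos_of_pos hpd.det_pos _
  positivity

lemma inv_isSymm {p : ℕ} (Cov : Matrix (Fin p) (Fin p) ℝ) (hsym : Cov.IsSymm) :
    (Cov⁻¹).IsSymm := by
  rw [Matrix.IsSymm, Matrix.transpose_nonsing_inv, hsym.eq]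

lemma gaussHasDeriv {p : ℕ} (μ : Fin p → ℝ) (Cov : Matrix (Fin p) (Fin p) ℝ)
    (hsym : Cov.IsSymm) (x : Fin p → ℝ) (j : Fin p) :
    HasDerivAt (fun t => gaussDens μ Cov (Function.update x j t))
      (gaussDens μ Cov x * (-((Cov⁻¹ *ᵥ (x - μ)) j))) (x j) := by
  set A := Cov⁻¹ with hA
  set w := x - μ with hw
  set C := (2 * Real.pi) ^ (-(p : ℝ) / 2) * Cov.det ^ (-(1 : ℝ) / 2) with hC
  have hup : ∀ t : ℝ, Function.update x j t - μ = Function.update w j (t - μ j) := by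
    intro t; funext i
    by_cases hi : i = j <;> simp [Function.update_apply, hi, hw]
  have hwj : w j = x j - μ j := rfl
  have hinner : HasDerivAt (fun t : ℝ => t - μ j) 1 (x j) := by
    simpa using (hasDerivAt_id (x j)).sub_const (μ j)
  have hq : HasDerivAt (fun t => Function.update w j (t - μ j) ⬝ᵥ (A *ᵥ Function.update w j (t - μ j)))
      (2 * (A *ᵥ w) j * 1) (x j) := by
    have := (quadDeriv A (inv_isSymm Cov hsym) w j)
    rw [hwj] at this
    exact HasDerivAt.comp (x j) (by simpa [hwj] using quadDeriv A (inv_isSymm Cov hsym) w j) hinner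
  have hfull : HasDerivAt (fun t => C * Real.exp (-(Function.update w j (t - μ j) ⬝ᵥ (A *ᵥ Function.update w j (t - μ j))) / 2))
      (C * (Real.exp (-(w ⬝ᵥ (A *ᵥ w)) / 2) * (-(2 * (A *ᵥ w) j * 1) / 2))) (x j) := by
    have h1 := ((hq.neg.div_const 2).exp).const_mul C
    have : Function.update w j (x j - μ j) = w := by
      rw [← hwj]; exact Function.update_eq_self j w
    simpa [this, mul_comm, mul_left_comm, mul_assoc] using h1
  have hfun : (fun t => gaussDens μ Cov (Function.update x j t))
      = fun t => C * Real.exp (-(Function.update w j (t - μ j) ⬝ᵥ (A *ᵥ Function.update w j (t - μ j))) / 2) := by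
    funext t; rw [gaussDens, hup t]
  rw [hfun]
  have hval : gaussDens μ Cov x * (-((A *ᵥ w) j))
      = C * (Real.exp (-(w ⬝ᵥ (A *ᵥ w)) / 2) * (-(2 * (A *ᵥ w) j * 1) / 2)) := by
    rw [gaussDens]; ring
  rw [show gaussDens μ Cov x * (-((Cov⁻¹ *ᵥ (x - μ)) j)) = C * (Real.exp (-(w ⬝ᵥ (A *ᵥ w)) / 2) * (-(2 * (A *ᵥ w) j * 1) / 2)) from hval]
  exact hfull

/-- for the normal distribution `N(μ, Σ)`, the function `Φ(x) = x_j − μ_j`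
satisfies `A(∇ₓΦ)(x) = −(Σ⁻¹(x−μ))_j = −∂_{μ_j} log q(x)` and `E_q[Φ] = 0`; i.e. it is the
Wasserstein score function of the mean parameter `μ_j`. -/
theorem stmt12 {p : ℕ} (μ : Fin p → ℝ) (Cov : Matrix (Fin p) (Fin p) ℝ)
    (hsym : Cov.IsSymm) (hpd : Cov.PosDef) (j : Fin p) :
    (∀ x : Fin p → ℝ,
        stein (gaussDens μ Cov) (fun y => gradv (fun z => z j - μ j) y) x
          = -((Cov⁻¹ *ᵥ (x - μ)) j)
        ∧ -((Cov⁻¹ *ᵥ (x - μ)) j)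
          = - pdv j (fun m => Real.log (gaussDens m Cov x)) μ)
    ∧ ∫ x, gaussDens μ Cov x * (x j - μ j) = 0 := by
  have hCA : (Cov⁻¹).IsSymm := inv_isSymm Cov hsym
  have hgrad : ∀ (y : Fin p → ℝ) (i : Fin p),
      gradv (fun z => z j - μ j) y i = if i = j then 1 else 0 := by
    intro y i
    rw [gradv, pdv]
    by_cases hi : i = j
    · subst hi
      simp only [Function.update_self]
      simpa using deriv_sub_const (f := fun t : ℝ => t) (μ j)
    · have : (fun t => Function.update y i t j - μ j) = fun _ => y j - μ j := by
        funext t; rw [Function.update_of_ne (fun h => hi h.symm)]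
      rw [this, deriv_const]
      simp [hi]
  constructor
  · intro x
    have hqpos := gaussDens_pos μ Cov hpd x
    have hstein : stein (gaussDens μ Cov) (fun y => gradv (fun z => z j - μ j) y) x
        = -((Cov⁻¹ *ᵥ (x - μ)) j) := by
      rw [stein, divv]
      have hterm : ∀ i : Fin p, i ∈ Finset.univ →
          pdv i (fun y => gaussDens μ Cov y * gradv (fun z => z j - μ j) y i) x
          = if i = j then gaussDens μ Cov x * (-((Cov⁻¹ *ᵥ (x - μ)) j)) else 0 := by
        intro i _
        have hfe : (fun y => gaussDens μ Cov y * gradv (fun z => z j - μ j) y i)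
            = fun y => gaussDens μ Cov y * (if i = j then 1 else 0) := by
          funext y; rw [hgrad y i]
        rw [hfe]
        by_cases hi : i = j
        · subst hi
          simp only [if_true, mul_one]
          exact (gaussHasDeriv μ Cov hsym x i).deriv
        · simp only [hi, if_false, mul_zero]
          rw [pdv]; exact deriv_const _ _
      rw [Finset.sum_congr rfl hterm]
      rw [Finset.sum_ite_eq' Finset.univ j (fun _ => gaussDens μ Cov x * (-((Cov⁻¹ *ᵥ (x - μ)) j)))]
      simp only [Finset.mem_univ, if_true]
      field_simp
    refine ⟨hstein, ?_⟩
    -- second: pdv of log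
    have hup : ∀ t : ℝ, x - Function.update μ j t = Function.update (x - μ) j (x j - t) := by
      intro t; funext i
      by_cases hi : i = j <;> simp [Function.update_apply, hi]
    set C := (2 * Real.pi) ^ (-(p : ℝ) / 2) * Cov.det ^ (-(1 : ℝ) / 2) with hC
    have hCpos : 0 < C := by
      have h1 : (0:ℝ) < (2 * Real.pi) ^ (-(p : ℝ) / 2) := Real.rpow_pos_of_pos (by positivity) _
      have h2 : (0:ℝ) < Cov.det ^ (-(1 : ℝ) / 2) := Real.rpow_pos_of_pos hpd.det_pos _
      positivity
    set w := x - μ with hw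
    have hfe : (fun m => Real.log (gaussDens m Cov x)) ∘ (Function.update μ j)
        = fun t => Real.log C + (-(Function.update w j (x j - t) ⬝ᵥ (Cov⁻¹ *ᵥ Function.update w j (x j - t))) / 2) := by
      funext t
      simp only [Function.comp_apply]
      rw [gaussDens, hup t, ← hC, Real.log_mul (ne_of_gt hCpos) (Real.exp_ne_zero _), Real.log_exp]
    have hinner : HasDerivAt (fun t : ℝ => x j - t) (-1) (μ j) := by
      simpa using (hasDerivAt_id' (μ j)).const_sub (x j)
    have hQ : HasDerivAt (fun t => Function.update w j (x j - t) ⬝ᵥ (Cov⁻¹ *ᵥ Function.update w j (x j - t)))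
        (2 * ((Cov⁻¹) *ᵥ w) j * (-1)) (μ j) := by
      have hwj : x j - μ j = w j := rfl
      exact HasDerivAt.comp (μ j) (by simpa [hwj] using quadDeriv (Cov⁻¹) hCA w j) hinner
    have hlog : HasDerivAt (fun t => Real.log C + (-(Function.update w j (x j - t) ⬝ᵥ (Cov⁻¹ *ᵥ Function.update w j (x j - t))) / 2))
        (-(2 * ((Cov⁻¹) *ᵥ w) j * (-1)) / 2) (μ j) :=
      (hQ.neg.div_const 2).const_add (Real.log C)
    have : pdv j (fun m => Real.log (gaussDens m Cov x)) μ
        = -(2 * ((Cov⁻¹) *ᵥ w) j * (-1)) / 2 := by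
      rw [pdv]
      have : (fun t => Real.log (gaussDens (Function.update μ j t) Cov x))
          = fun t => Real.log C + (-(Function.update w j (x j - t) ⬝ᵥ (Cov⁻¹ *ᵥ Function.update w j (x j - t))) / 2) := hfe
      rw [this, hlog.deriv]
    rw [this]; ring
  · -- integral
    have hrefl := integral_sub_left_eq_self
      (fun y => gaussDens μ Cov y * (y j - μ j)) volume (μ + μ)
    have hodd : ∀ y : Fin p → ℝ,
        gaussDens μ Cov ((μ + μ) - y) * (((μ + μ) - y) j - μ j)
        = -(gaussDens μ Cov y * (y j - μ j)) := by
      intro y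
      have h1 : (μ + μ) - y - μ = -(y - μ) := by funext i; simp; ring
      have h2 : gaussDens μ Cov ((μ + μ) - y) = gaussDens μ Cov y := by
        unfold gaussDens
        rw [h1, Matrix.mulVec_neg, dotProduct_neg, neg_dotProduct, neg_neg]
      rw [h2]
      have h3 : ((μ + μ) - y) j - μ j = -(y j - μ j) := by simp; ring
      rw [h3]; ring
    rw [show (fun y => gaussDens μ Cov ((μ + μ) - y) * (((μ + μ) - y) j - μ j))
        = fun y => -(gaussDens μ Cov y * (y j - μ j)) from funext hodd] at hrefl
    rw [integral_neg] at hrefl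
    linarith [hrefl]
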